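/- Let 𝒦 ⊆ 𝒢 be a Lie subalgebra and let 𝒦̂ be the linear span of the leading terms of the nonzero elements of 𝒦. Then 𝒦̂ is a Lie subalgebra of 𝒢 spanned by homogeneous elements, and dim_ℂ(𝒦̂) = dim_ℂ(𝒦). -/
import Mathlib


open DirectSum Module

/-- The degree-`i` homogeneous component of `v` with respect to the grading `𝒲`. -/
noncomputable def grComp {W : Type*} [AddCommGroup W] [Module ℂ W]
    (𝒲 : ℤ → Submodule ℂ W) [Decomposition 𝒲] (v : W) (i : ℤ) : W :=
  ((decompose 𝒲 v) i : W)

/-- `IsLead 𝒲 v d z` : `z` is the leading term of `v`, of degree `d`. -/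
def IsLead {W : Type*} [AddCommGroup W] [Module ℂ W]
    (𝒲 : ℤ → Submodule ℂ W) [Decomposition 𝒲] (v : W) (d : ℤ) (z : W) : Prop :=
  grComp 𝒲 v d = z ∧ z ≠ 0 ∧ ∀ i < d, grComp 𝒲 v i = 0

/-- The span of the leading terms of nonzero elements of a subspace `M`. -/
noncomputable def hatSub {W : Type*} [AddCommGroup W] [Module ℂ W]
    (𝒲 : ℤ → Submodule ℂ W) [Decomposition 𝒲] (M : Submodule ℂ W) : Submodule ℂ W :=
  Submodule.span ℂ {z | ∃ v ∈ M, v ≠ 0 ∧ ∃ d : ℤ, IsLead 𝒲 v d z}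

section Aux

variable {W : Type*} [AddCommGroup W] [Module ℂ W]
    (𝒲 : ℤ → Submodule ℂ W) [Decomposition 𝒲]

/-- `grComp` as a linear map. -/
noncomputable def grCompL (i : ℤ) : W →ₗ[ℂ] W :=
  (𝒲 i).subtype ∘ₗ (DirectSum.component ℂ ℤ (fun j => ↥(𝒲 j)) i) ∘ₗ
    (decomposeLinearEquiv 𝒲).toLinearMap

@[simp] lemma grCompL_apply (i : ℤ) (v : W) : grCompL 𝒲 i v = grComp 𝒲 v i := rfl

lemma grComp_mem (v : W) (i : ℤ) : grComp 𝒲 v i ∈ 𝒲 i := ((decompose 𝒲 v) i).2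

lemma grComp_of_mem_same {x : W} {i : ℤ} (hx : x ∈ 𝒲 i) : grComp 𝒲 x i = x :=
  decompose_of_mem_same 𝒲 hx

lemma grComp_of_mem_ne {x : W} {i j : ℤ} (hx : x ∈ 𝒲 i) (hij : i ≠ j) :
    grComp 𝒲 x j = 0 := by
  have := decompose_of_mem_ne 𝒲 hx hij
  simpa [grComp] using this

lemma exists_grComp_ne_zero {v : W} (hv : v ≠ 0) : ∃ d : ℤ, grComp 𝒲 v d ≠ 0 := by
  classical
  by_contra hcon
  push_neg at hcon
  apply hv
  rw [← DirectSum.sum_support_decompose 𝒲 v]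
  exact Finset.sum_eq_zero fun i _ => hcon i

lemma hatSub_mono {M N : Submodule ℂ W} (h : M ≤ N) : hatSub 𝒲 M ≤ hatSub 𝒲 N := by
  apply Submodule.span_mono
  rintro z ⟨v, hv, rest⟩
  exact ⟨v, h hv, rest⟩

lemma hatSub_bot : hatSub 𝒲 (⊥ : Submodule ℂ W) = ⊥ := by
  have : {z : W | ∃ v ∈ (⊥ : Submodule ℂ W), v ≠ 0 ∧ ∃ d : ℤ, IsLead 𝒲 v d z} = ∅ := by
    ext z
    simp only [Set.mem_setOf_eq, Submodule.mem_bot, Set.mem_empty_iff_false, iff_false]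
    rintro ⟨v, rfl, hv, -⟩
    exact hv rfl
  rw [hatSub, this, Submodule.span_empty]

end Aux

section Dim

variable {W : Type*} [AddCommGroup W] [Module ℂ W] [FiniteDimensional ℂ W]
    (𝒲 : ℤ → Submodule ℂ W) [Decomposition 𝒲]

lemma finrank_hatSub_aux : ∀ n : ℕ, ∀ M : Submodule ℂ W, finrank ℂ M ≤ n →
    finrank ℂ (hatSub 𝒲 M) = finrank ℂ M := by
  classical
  intro n
  induction n with
  | zero =>
    intro M hM
    have hbot : M = ⊥ := Submodule.finrank_eq_zero.mp (Nat.le_zero.mp hM)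
    rw [hbot, hatSub_bot]
  | succ n ih =>
    intro M hM
    by_cases hbot : M = ⊥
    · rw [hbot, hatSub_bot]
    -- the set of degrees in which elements of M have nonzero components
    set D : Set ℤ := {d | ∃ v ∈ M, grComp 𝒲 v d ≠ 0} with hD
    obtain ⟨s, hs⟩ : M.FG := IsNoetherian.noetherian M
    have hDF : ∀ d ∈ D, d ∈ s.biUnion (fun w => (decompose 𝒲 w).support) := by
      rintro d ⟨v, hvM, hvd⟩
      by_contra hcon
      have hker : ∀ w ∈ (s : Set W), w ∈ LinearMap.ker (grCompL 𝒲 d) := by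
        intro w hw
        rw [LinearMap.mem_ker, grCompL_apply]
        by_contra hw0
        apply hcon
        rw [Finset.mem_biUnion]
        exact ⟨w, hw, DFinsupp.mem_support_iff.mpr (fun h0 => hw0 (by
          simpa [grComp] using congrArg Subtype.val h0))⟩
      have hle : M ≤ LinearMap.ker (grCompL 𝒲 d) := by
        rw [← hs]; exact Submodule.span_le.mpr hker
      have h3 : grComp 𝒲 v d = 0 := hle hvM
      exact hvd h3
    have hDne : D.Nonempty := by
      obtain ⟨v, hvM, hv0⟩ := Submodule.exists_mem_ne_zero_of_ne_bot hbot
      obtain ⟨d, hd⟩ := exists_grComp_ne_zero 𝒲 hv0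
      exact ⟨d, v, hvM, hd⟩
    set F' : Finset ℤ := (s.biUnion (fun w => (decompose 𝒲 w).support)).filter (· ∈ D)
      with hF'
    have hmemF' : ∀ d ∈ D, d ∈ F' := fun d hd =>
      Finset.mem_filter.mpr ⟨hDF d hd, hd⟩
    have hF'ne : F'.Nonempty := ⟨hDne.choose, hmemF' _ hDne.choose_spec⟩
    set d0 : ℤ := F'.min' hF'ne with hd0
    have hd0D : d0 ∈ D := (Finset.mem_filter.mp (F'.min'_mem hF'ne)).2
    have hd0min : ∀ d ∈ D, d0 ≤ d := fun d hd => F'.min'_le d (hmemF' d hd)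
    have hltd0 : ∀ v ∈ M, ∀ i < d0, grComp 𝒲 v i = 0 := by
      intro v hv i hi
      by_contra h0
      exact absurd (hd0min i ⟨v, hv, h0⟩) (not_le.mpr hi)
    set φ : W →ₗ[ℂ] W := grCompL 𝒲 d0 with hφ
    set P : Submodule ℂ W := Submodule.map φ M with hP
    set M' : Submodule ℂ W := M ⊓ LinearMap.ker φ with hM'
    have hPG : P ≤ 𝒲 d0 := by
      rintro x ⟨v, hv, rfl⟩
      exact grComp_mem 𝒲 v d0
    -- (a) hatSub M = P ⊔ hatSub M'
    have ha : hatSub 𝒲 M = P ⊔ hatSub 𝒲 M' := by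
      apply le_antisymm
      · apply Submodule.span_le.mpr
        rintro z ⟨v, hvM, hvne, d, hzd, hzne, hlow⟩
        by_cases hv0 : grComp 𝒲 v d0 = 0
        · have hvM' : v ∈ M' := ⟨hvM, hv0⟩
          exact le_sup_right (α := Submodule ℂ W)
            (Submodule.subset_span ⟨v, hvM', hvne, d, hzd, hzne, hlow⟩)
        · have hdd0 : d = d0 := by
            have h1 : d0 ≤ d := hd0min d ⟨v, hvM, by rw [hzd]; exact hzne⟩
            have h2 : ¬ d0 < d := fun h => hv0 (hlow d0 h)
            omega
          have : z ∈ P := ⟨v, hvM, by rw [grCompL_apply, ← hdd0, hzd]⟩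
          exact le_sup_left (α := Submodule ℂ W) this
      · apply sup_le
        · rintro x ⟨v, hvM, rfl⟩
          by_cases hx0 : φ v = 0
          · rw [hx0]; exact zero_mem _
          · apply Submodule.subset_span
            refine ⟨v, hvM, ?_, d0, ?_, hx0, hltd0 v hvM⟩
            · rintro rfl; exact hx0 (map_zero φ)
            · rfl
        · exact hatSub_mono 𝒲 inf_le_left
    -- (b) disjointness
    have hbker : hatSub 𝒲 M' ≤ LinearMap.ker φ := by
      apply Submodule.span_le.mpr
      rintro z ⟨v, ⟨hvM, hvk⟩, hvne, d, hzd, hzne, hlow⟩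
      have hvk' : grComp 𝒲 v d0 = 0 := hvk
      have hdne : d ≠ d0 := by
        rintro rfl
        rw [hzd] at hvk'; exact hzne hvk'
      have hzG : z ∈ 𝒲 d := by rw [← hzd]; exact grComp_mem 𝒲 v d
      exact grComp_of_mem_ne 𝒲 hzG hdne
    have hdisj : P ⊓ hatSub 𝒲 M' = ⊥ := by
      rw [eq_bot_iff]
      rintro x ⟨hxP, hxH⟩
      have h1 : x ∈ 𝒲 d0 := hPG hxP
      have h2 : grComp 𝒲 x d0 = 0 := hbker hxH
      rw [grComp_of_mem_same 𝒲 h1] at h2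
      simp [h2]
    -- rank computations
    have hrk : finrank ℂ P + finrank ℂ M' = finrank ℂ M := by
      have h := LinearMap.finrank_range_add_finrank_ker (φ.comp M.subtype)
      have hr : LinearMap.range (φ.comp M.subtype) = P := by
        rw [LinearMap.range_comp, Submodule.range_subtype]
      have hk : finrank ℂ (LinearMap.ker (φ.comp M.subtype)) = finrank ℂ M' := by
        rw [LinearMap.ker_comp]
        rw [← Submodule.finrank_map_subtype_eq M (Submodule.comap M.subtype (LinearMap.ker φ))]
        rw [Submodule.map_comap_subtype]
      rw [hr, hk] at h
      exact h
    have hPpos : 0 < finrank ℂ P := by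
      obtain ⟨v, hvM, hvd⟩ := hd0D
      have : P ≠ ⊥ := by
        intro hPbot
        have hm : φ v ∈ P := ⟨v, hvM, rfl⟩
        rw [hPbot] at hm
        exact hvd ((Submodule.mem_bot ℂ).mp hm)
      exact Nat.pos_of_ne_zero (fun h0 => this (Submodule.finrank_eq_zero.mp h0))
    have hM'le : finrank ℂ M' ≤ n := by omega
    have hih := ih M' hM'le
    rw [ha]
    have hsum := Submodule.finrank_sup_add_finrank_inf_eq P (hatSub 𝒲 M')
    rw [hdisj, finrank_bot, add_zero] at hsum
    rw [hsum, hih, hrk]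

lemma finrank_hatSub (M : Submodule ℂ W) :
    finrank ℂ (hatSub 𝒲 M) = finrank ℂ M :=
  finrank_hatSub_aux 𝒲 (finrank ℂ M) M le_rfl

end Dim

section Bracket

variable {L : Type*} [LieRing L] [LieAlgebra ℂ L]
    (𝒢 : ℤ → Submodule ℂ L) [Decomposition 𝒢]

lemma sum_lie' {ι : Type*} (s : Finset ι) (f : ι → L) (y : L) :
    ⁅∑ i ∈ s, f i, y⁆ = ∑ i ∈ s, ⁅f i, y⁆ := by
  classical
  induction s using Finset.cons_induction with
  | empty => simp
  | cons a s ha ih => rw [Finset.sum_cons, Finset.sum_cons, add_lie, ih]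

lemma lie_sum' {ι : Type*} (x : L) (s : Finset ι) (f : ι → L) :
    ⁅x, ∑ i ∈ s, f i⁆ = ∑ i ∈ s, ⁅x, f i⁆ := by
  classical
  induction s using Finset.cons_induction with
  | empty => simp
  | cons a s ha ih => rw [Finset.sum_cons, Finset.sum_cons, lie_add, ih]

lemma lead_bracket (hbr : ∀ (i j : ℤ), ∀ x ∈ 𝒢 i, ∀ y ∈ 𝒢 j, ⁅x, y⁆ ∈ 𝒢 (i + j))
    {v u z w : L} {d e : ℤ} (hv : IsLead 𝒢 v d z) (hu : IsLead 𝒢 u e w) :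
    grComp 𝒢 ⁅v, u⁆ (d + e) = ⁅z, w⁆ ∧ ∀ n < d + e, grComp 𝒢 ⁅v, u⁆ n = 0 := by
  classical
  obtain ⟨hvz, hzne, hvlow⟩ := hv
  obtain ⟨huw, hwne, hulow⟩ := hu
  set sv := (decompose 𝒢 v).support with hsv
  set su := (decompose 𝒢 u).support with hsu
  have hvsum : v = ∑ i ∈ sv, grComp 𝒢 v i := (DirectSum.sum_support_decompose 𝒢 v).symm
  have husum : u = ∑ j ∈ su, grComp 𝒢 u j := (DirectSum.sum_support_decompose 𝒢 u).symm
  have hsupp_v : ∀ i ∈ sv, d ≤ i := by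
    intro i hi
    by_contra h
    have : grComp 𝒢 v i = 0 := hvlow i (not_le.mp h)
    exact (DFinsupp.mem_support_iff.mp hi) (Subtype.ext this)
  have hsupp_u : ∀ j ∈ su, e ≤ j := by
    intro j hj
    by_contra h
    have : grComp 𝒢 u j = 0 := hulow j (not_le.mp h)
    exact (DFinsupp.mem_support_iff.mp hj) (Subtype.ext this)
  have hbracket : ⁅v, u⁆ = ∑ i ∈ sv, ∑ j ∈ su, ⁅grComp 𝒢 v i, grComp 𝒢 u j⁆ := by
    conv_lhs => rw [hvsum, husum]
    rw [sum_lie']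
    exact Finset.sum_congr rfl (fun i _ => lie_sum' _ _ _)
  have hcomp : ∀ n : ℤ, grComp 𝒢 ⁅v, u⁆ n =
      ∑ i ∈ sv, ∑ j ∈ su, grComp 𝒢 ⁅grComp 𝒢 v i, grComp 𝒢 u j⁆ n := by
    intro n
    have := congrArg (grCompL 𝒢 n) hbracket
    rw [grCompL_apply, map_sum] at this
    rw [this]
    refine Finset.sum_congr rfl (fun i _ => ?_)
    rw [map_sum]
    exact Finset.sum_congr rfl (fun j _ => by rw [grCompL_apply])
  have hterm_mem : ∀ i j : ℤ, ⁅grComp 𝒢 v i, grComp 𝒢 u j⁆ ∈ 𝒢 (i + j) :=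
    fun i j => hbr i j _ (grComp_mem 𝒢 v i) _ (grComp_mem 𝒢 u j)
  constructor
  · rw [hcomp]
    have hdv : d ∈ sv := DFinsupp.mem_support_iff.mpr (fun h0 => hzne (by
      rw [← hvz]; exact congrArg Subtype.val h0))
    have heu : e ∈ su := DFinsupp.mem_support_iff.mpr (fun h0 => hwne (by
      rw [← huw]; exact congrArg Subtype.val h0))
    rw [Finset.sum_eq_single_of_mem d hdv]
    · rw [Finset.sum_eq_single_of_mem e heu]
      · rw [grComp_of_mem_same 𝒢 (hterm_mem d e), hvz, huw]
      · intro j hj hje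
        apply grComp_of_mem_ne 𝒢 (hterm_mem d j)
        have := hsupp_u j hj
        omega
    · intro i hi hid
      apply Finset.sum_eq_zero
      intro j hj
      apply grComp_of_mem_ne 𝒢 (hterm_mem i j)
      have h1 := hsupp_v i hi
      have h2 := hsupp_u j hj
      omega
  · intro n hn
    rw [hcomp]
    apply Finset.sum_eq_zero
    intro i hi
    apply Finset.sum_eq_zero
    intro j hj
    apply grComp_of_mem_ne 𝒢 (hterm_mem i j)
    have h1 := hsupp_v i hi
    have h2 := hsupp_u j hj
    omega

end Bracket

theorem statement3 {L : Type*} [LieRing L] [LieAlgebra ℂ L] [FiniteDimensional ℂ L]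
    (𝒢 : ℤ → Submodule ℂ L) [Decomposition 𝒢]
    (hbr : ∀ (i j : ℤ), ∀ x ∈ 𝒢 i, ∀ y ∈ 𝒢 j, ⁅x, y⁆ ∈ 𝒢 (i + j))
    (K : LieSubalgebra ℂ L) :
    (∀ x ∈ hatSub 𝒢 K.toSubmodule, ∀ y ∈ hatSub 𝒢 K.toSubmodule,
      ⁅x, y⁆ ∈ hatSub 𝒢 K.toSubmodule) ∧
    (∃ S : Set L, (∀ z ∈ S, ∃ d : ℤ, z ∈ 𝒢 d) ∧
      hatSub 𝒢 K.toSubmodule = Submodule.span ℂ S) ∧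
    finrank ℂ (hatSub 𝒢 K.toSubmodule) = finrank ℂ K.toSubmodule := by
  set G : Set L := {z | ∃ v ∈ K.toSubmodule, v ≠ 0 ∧ ∃ d : ℤ, IsLead 𝒢 v d z} with hG
  have hhat : hatSub 𝒢 K.toSubmodule = Submodule.span ℂ G := rfl
  refine ⟨?_, ⟨G, ?_, hhat⟩, finrank_hatSub 𝒢 K.toSubmodule⟩
  · -- bracket closedness
    have key : ∀ x ∈ G, ∀ y ∈ G, ⁅x, y⁆ ∈ hatSub 𝒢 K.toSubmodule := by
      rintro x ⟨v, hvK, hvne, d, hvl⟩ y ⟨u, huK, hune, e, hul⟩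
      obtain ⟨heq, hlow⟩ := lead_bracket 𝒢 hbr hvl hul
      by_cases hxy : ⁅x, y⁆ = 0
      · rw [hxy]; exact zero_mem _
      · apply Submodule.subset_span
        refine ⟨⁅v, u⁆, K.lie_mem hvK huK, ?_, d + e, heq, hxy, hlow⟩
        intro h0
        rw [h0] at heq
        apply hxy
        rw [← heq]
        simp [grComp]
    intro x hx
    rw [hhat] at hx
    induction hx using Submodule.span_induction with
    | mem a ha =>
      intro y hy
      rw [hhat] at hy
      induction hy using Submodule.span_induction with
      | mem b hb => exact key a ha b hb
      | zero => rw [lie_zero]; exact zero_mem _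
      | add b c _ _ hb hc => rw [lie_add]; exact add_mem hb hc
      | smul t b _ hb => rw [lie_smul]; exact Submodule.smul_mem _ _ hb
    | zero => intro y _; rw [zero_lie]; exact zero_mem _
    | add a b _ _ ha hb => intro y hy; rw [add_lie]; exact add_mem (ha y hy) (hb y hy)
    | smul t a _ ha => intro y hy; rw [smul_lie]; exact Submodule.smul_mem _ _ (ha y hy)
  · rintro z ⟨v, _, _, d, hzd, _, _⟩
    exact ⟨d, by rw [← hzd]; exact grComp_mem 𝒢 v d⟩
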